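/- For every integer k ≥ 1, the set of Knott representations of F_k is finite and has exactly F_k elements; that is, κ(F_k) = F_k. -/

import Mathlib

/-- The golden ratio φ = (1+√5)/2. -/
noncomputable def phi : ℝ := (1 + Real.sqrt 5) / 2

/-- `a` is a finite φ-representation of the real number `x`: a finitely supported
function `a : ℤ → {0,1}` with `x = Σ_{i ∈ ℤ} a(i) · φ^i`. -/
def IsPhiRep (x : ℝ) (a : ℤ →₀ ℕ) : Prop :=
  (∀ i, a i ≤ 1) ∧ x = ∑ i ∈ a.support, (a i : ℝ) * phi ^ i

/-- `a` is the canonical φ-representation of `x`: a finite φ-representation with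
no two adjacent digits equal to 1. -/
def IsCanonRep (x : ℝ) (a : ℤ →₀ ℕ) : Prop :=
  IsPhiRep x a ∧ ∀ i : ℤ, a i * a (i + 1) = 0

/-- `a` is a Knott representation of `n`: a finite φ-representation of `n` such that,
writing `j` for the minimal index with `a j = 1`, it is not the case that both
`a (j+1) = 1` and `a (j+2) = 0` (the digit string does not end in 011). -/
def IsKnottRep (n : ℕ) (a : ℤ →₀ ℕ) : Prop :=
  IsPhiRep n a ∧
    ∀ j : ℤ, (a j ≠ 0 ∧ ∀ i : ℤ, a i ≠ 0 → j ≤ i) → ¬(a (j + 1) = 1 ∧ a (j + 2) = 0)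

/-- The set of Knott representations of `n`. -/
def knottSet (n : ℕ) : Set (ℤ →₀ ℕ) := {a | IsKnottRep n a}



open Finset

lemma sqrt5_sq : Real.sqrt 5 * Real.sqrt 5 = 5 := Real.mul_self_sqrt (by norm_num)
lemma sqrt5_lt : Real.sqrt 5 < 2.23607 := by
  nlinarith [sqrt5_sq, Real.sqrt_nonneg 5]
lemma sqrt5_gt : 2.23606 < Real.sqrt 5 := by
  nlinarith [sqrt5_sq, Real.sqrt_nonneg 5]

lemma phi_sq : phi ^ 2 = phi + 1 := by
  unfold phi; nlinarith [sqrt5_sq]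
lemma phi_mul_self : phi * phi = phi + 1 := by nlinarith [phi_sq]
lemma one_lt_phi : 1 < phi := by unfold phi; nlinarith [sqrt5_gt]
lemma phi_pos : 0 < phi := lt_trans one_pos one_lt_phi
lemma phi_ne_zero : phi ≠ 0 := ne_of_gt phi_pos
lemma phi_lt' : phi < 1.61804 := by unfold phi; nlinarith [sqrt5_lt]
lemma phi_gt' : 1.61803 < phi := by unfold phi; nlinarith [sqrt5_gt]

lemma irr_phi : Irrational phi := by
  have h5 : Irrational (Real.sqrt 5) := (Nat.prime_five).irrational_sqrt
  have : phi = (2 : ℚ)⁻¹ * (((1:ℤ) : ℝ) + Real.sqrt 5) := by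
    push_cast [phi]; ring
  rw [this]
  exact ((h5.intCast_add 1).ratCast_mul (by norm_num))

/-- Extended Fibonacci numbers over ℤ. -/
def fz : ℤ → ℤ
  | (n : ℕ) => Nat.fib n
  | .negSucc n => (-1) ^ n * Nat.fib (n + 1)

lemma fz_natCast (n : ℕ) : fz n = Nat.fib n := rfl
lemma fz_ofNat (n : ℕ) : fz (Int.ofNat n) = Nat.fib n := rfl
lemma fz_negSucc (m : ℕ) : fz (Int.negSucc m) = (-1) ^ m * Nat.fib (m + 1) := rfl

lemma fz_rec (n : ℤ) : fz (n + 2) = fz (n + 1) + fz n := by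
  rcases n with m | m
  · have e2 : (Int.ofNat m) + 2 = ((m + 2 : ℕ) : ℤ) := by simp
    have e1 : (Int.ofNat m) + 1 = ((m + 1 : ℕ) : ℤ) := by simp
    rw [e1, e2, fz_ofNat, fz_natCast, fz_natCast, Nat.fib_add_two]
    push_cast; ring
  · rcases m with _ | m
    · show fz 1 = fz 0 + fz (Int.negSucc 0)
      rw [fz_negSucc]; show (1 : ℤ) = 0 + (-1)^0 * 1; norm_num
    · rcases m with _ | m
      · show fz 0 = fz (Int.negSucc 0) + fz (Int.negSucc 1)
        rw [fz_negSucc, fz_negSucc]; show (0 : ℤ) = (-1)^0 * 1 + (-1)^1 * 1; norm_num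
      · have h2 : Int.negSucc (m+2) + 2 = Int.negSucc m := by
          simp [Int.negSucc_eq]; ring
        have h1 : Int.negSucc (m+2) + 1 = Int.negSucc (m+1) := by
          simp [Int.negSucc_eq]; ring
        rw [h2, h1, fz_negSucc, fz_negSucc, fz_negSucc]
        have : Nat.fib (m+3) = Nat.fib (m+1) + Nat.fib (m+2) := Nat.fib_add_two
        rw [this]; push_cast; ring

lemma fz_eq_zero_iff (n : ℤ) : fz n = 0 ↔ n = 0 := by
  constructor
  · intro h
    rcases n with m | m
    · rcases m with _ | m
      · rfl
      · exfalso
        have h2 : 0 < Nat.fib (m+1) := Nat.fib_pos.mpr (Nat.succ_pos m)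
        rw [fz_ofNat] at h
        omega
    · exfalso
      rw [fz_negSucc] at h
      rcases mul_eq_zero.mp h with h | h
      · exact pow_ne_zero m (by norm_num : (-1:ℤ) ≠ 0) h
      · have h2 : 0 < Nat.fib (m+1) := Nat.fib_pos.mpr (Nat.succ_pos m)
        omega
  · rintro rfl; rfl

lemma fz_zero : fz 0 = 0 := rfl
lemma fz_one : fz 1 = 1 := rfl
lemma fz_neg_one : fz (-1) = 1 := rfl

section zpow_rep
variable (x : ℝ) (hx : x * x = x + 1) (hx0 : x ≠ 0)

include hx hx0 in
lemma x_zpow (i : ℤ) : x ^ i = (fz (i-1) : ℝ) + (fz i : ℝ) * x := by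
  induction i using Int.induction_on with
  | zero => norm_num [fz_zero, fz_neg_one]
  | succ n ih =>
      rw [zpow_add_one₀ hx0, ih]
      have h2 : fz ((n:ℤ)+1) = fz ((n:ℤ)) + fz ((n:ℤ)-1) := by
        have := fz_rec ((n:ℤ)-1)
        have e1 : (n:ℤ)-1+2 = (n:ℤ)+1 := by ring
        have e2 : (n:ℤ)-1+1 = (n:ℤ) := by ring
        rw [e1, e2] at this; exact this
      have h2' : (fz ((n:ℤ)+1) : ℝ) = fz ((n:ℤ)) + fz ((n:ℤ)-1) := by exact_mod_cast h2
      have e3 : (n:ℤ)+1-1 = (n:ℤ) := by ring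
      rw [e3, h2']
      linear_combination (fz (n:ℤ) : ℝ) * hx
  | pred n ih =>
      have h1 : x ^ (-(n:ℤ)-1) * x = x ^ (-(n:ℤ)) := by
        rw [← zpow_add_one₀ hx0]; ring_nf
      have h3 : fz (-(n:ℤ)) = fz (-(n:ℤ)-1) + fz (-(n:ℤ)-2) := by
        have := fz_rec (-(n:ℤ)-2)
        have e1 : -(n:ℤ)-2+2 = -(n:ℤ) := by ring
        have e2 : -(n:ℤ)-2+1 = -(n:ℤ)-1 := by ring
        rw [e1, e2] at this; exact this
      have h3' : (fz (-(n:ℤ)) : ℝ) = fz (-(n:ℤ)-1) + fz (-(n:ℤ)-2) := by exact_mod_cast h3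
      have key : (x ^ (-(n:ℤ)-1)) * x = ((fz (-(n:ℤ)-1-1) : ℝ) + (fz (-(n:ℤ)-1)) * x) * x := by
        rw [h1, ih]
        have e4 : -(n:ℤ)-1-1 = -(n:ℤ)-2 := by ring
        rw [e4, h3']
        linear_combination (-(fz (-(n:ℤ)-1) : ℝ)) * hx
      exact mul_right_cancel₀ hx0 key
end zpow_rep

lemma phi_zpow (i : ℤ) : phi ^ i = (fz (i-1) : ℝ) + (fz i : ℝ) * phi :=
  x_zpow phi phi_mul_self phi_ne_zero i

noncomputable def psi : ℝ := (1 - Real.sqrt 5) / 2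
lemma psi_mul_self : psi * psi = psi + 1 := by unfold psi; nlinarith [sqrt5_sq]
lemma psi_neg : psi < 0 := by unfold psi; nlinarith [sqrt5_gt]
lemma psi_ne_zero : psi ≠ 0 := ne_of_lt psi_neg
lemma psi_zpow (i : ℤ) : psi ^ i = (fz (i-1) : ℝ) + (fz i : ℝ) * psi :=
  x_zpow psi psi_mul_self psi_ne_zero i
lemma psi_eq : psi = -phi⁻¹ := by
  have h : phi * psi = -1 := by unfold phi psi; nlinarith [sqrt5_sq]
  have h2 : phi * (-phi⁻¹) = -1 := by rw [mul_neg, mul_inv_cancel₀ phi_ne_zero]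
  exact mul_left_cancel₀ phi_ne_zero (h.trans h2.symm)

/-! ### Sums over finsets of digit positions -/

noncomputable def sumPhi (S : Finset ℤ) : ℝ := ∑ i ∈ S, phi ^ i
noncomputable def sumPsi (S : Finset ℤ) : ℝ := ∑ i ∈ S, psi ^ i
def c1 (S : Finset ℤ) : ℤ := ∑ i ∈ S, fz (i-1)
def c2 (S : Finset ℤ) : ℤ := ∑ i ∈ S, fz i

lemma sumPhi_eq (S : Finset ℤ) : sumPhi S = (c1 S : ℝ) + (c2 S : ℝ) * phi := by
  unfold sumPhi c1 c2
  push_cast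
  rw [Finset.sum_mul, ← Finset.sum_add_distrib]
  exact Finset.sum_congr rfl (fun i _ => phi_zpow i)

lemma sumPsi_eq (S : Finset ℤ) : sumPsi S = (c1 S : ℝ) + (c2 S : ℝ) * psi := by
  unfold sumPsi c1 c2
  push_cast
  rw [Finset.sum_mul, ← Finset.sum_add_distrib]
  exact Finset.sum_congr rfl (fun i _ => psi_zpow i)

lemma int_phi_indep {A B C D : ℤ} (h : (A : ℝ) + B * phi = (C : ℝ) + D * phi) :
    A = C ∧ B = D := by
  by_cases hBD : B = D
  · subst hBD
    constructor
    · have : (A : ℝ) = C := by linarith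
      exact_mod_cast this
    · rfl
  · exfalso
    have hBD' : ((B:ℝ) - D) ≠ 0 := by
      have h0 : ((B - D : ℤ) : ℝ) ≠ 0 := Int.cast_ne_zero.mpr (sub_ne_zero_of_ne hBD)
      push_cast at h0; exact h0
    have hq : ((((C - A : ℚ)) / ((B - D : ℚ)) : ℚ) : ℝ) = phi := by
      push_cast
      field_simp
      linarith
    exact irr_phi ⟨_, hq⟩

lemma rep_iff_coords {S : Finset ℤ} {n : ℕ} :
    sumPhi S = n ↔ (c1 S = n ∧ c2 S = 0) := by
  constructor
  · intro h
    rw [sumPhi_eq] at h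
    have h' : (c1 S : ℝ) + c2 S * phi = ((n:ℤ) : ℝ) + ((0:ℤ) : ℝ) * phi := by
      push_cast; push_cast at h; linarith
    obtain ⟨h1, h2⟩ := int_phi_indep h'
    exact ⟨by exact_mod_cast h1, h2⟩
  · rintro ⟨h1, h2⟩
    rw [sumPhi_eq, h1, h2]
    push_cast; ring

lemma sumPsi_of_coords {S : Finset ℤ} {n : ℕ} (h1 : c1 S = n) (h2 : c2 S = 0) :
    sumPsi S = n := by
  rw [sumPsi_eq, h1, h2]; push_cast; ring

/-- φ^t is a natural number only for t = 0. -/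
lemma zpow_eq_nat {t : ℤ} {c : ℕ} (h : phi ^ t = (c : ℝ)) : t = 0 ∧ c = 1 := by
  rw [phi_zpow] at h
  have h' : (fz (t-1) : ℝ) + fz t * phi = ((c:ℤ) : ℝ) + ((0:ℤ):ℝ) * phi := by
    push_cast; linarith
  obtain ⟨h1, h2⟩ := int_phi_indep h'
  have ht : t = 0 := (fz_eq_zero_iff t).mp h2
  subst ht
  refine ⟨rfl, ?_⟩
  simp [fz_neg_one] at h1
  omega

/-! ### Geometric estimates -/

lemma inv_phi_eq : phi⁻¹ = phi - 1 := by
  have h : phi * (phi - 1) = 1 := by nlinarith [phi_mul_self]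
  exact inv_eq_of_mul_eq_one_right h

lemma geom_nat_le {r : ℝ} (h0 : 0 ≤ r) (h1 : r < 1) (T : Finset ℕ) :
    ∑ t ∈ T, r ^ t ≤ (1 - r)⁻¹ := by
  have hs : Summable (fun t : ℕ => r ^ t) := summable_geometric_of_lt_one h0 h1
  calc ∑ t ∈ T, r ^ t ≤ ∑' t : ℕ, r ^ t := Summable.sum_le_tsum T (fun i _ => pow_nonneg h0 i) hs
    _ = (1 - r)⁻¹ := tsum_geometric_of_lt_one h0 h1

lemma zpow_phi_nonneg (i : ℤ) : 0 ≤ phi ^ i := le_of_lt (zpow_pos phi_pos i)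

/-- Sum of φ^i over a finset with all indices ≤ m is at most φ^(m+2). -/
lemma sumPhi_le {S : Finset ℤ} {m : ℤ} (h : ∀ i ∈ S, i ≤ m) : sumPhi S ≤ phi ^ (m + 2) := by
  have hinj : ∀ x ∈ S, ∀ y ∈ S, (m - x).toNat = (m - y).toNat → x = y := by
    intro x hx y hy hxy
    have hx' := h x hx; have hy' := h y hy
    omega
  have himg : ∑ t ∈ S.image (fun i => (m - i).toNat), phi ^ m * (phi⁻¹) ^ t
      = ∑ i ∈ S, phi ^ m * (phi⁻¹) ^ ((m - i).toNat) := Finset.sum_image hinj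
  have heq : sumPhi S = ∑ t ∈ S.image (fun i => (m - i).toNat), phi ^ m * (phi⁻¹) ^ t := by
    rw [himg]
    unfold sumPhi
    refine Finset.sum_congr rfl (fun i hi => ?_)
    have h1 : ((m - i).toNat : ℤ) = m - i := Int.toNat_of_nonneg (by linarith [h i hi])
    have h4 : phi⁻¹ ^ ((m - i).toNat) = phi ^ (-(m - i)) := by
      rw [inv_pow, ← zpow_natCast, h1, ← zpow_neg]
    rw [h4, ← zpow_add₀ phi_ne_zero]
    congr 1
    ring
  rw [heq]
  have hr0 : (0:ℝ) ≤ phi⁻¹ := le_of_lt (inv_pos.mpr phi_pos)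
  have hr1 : phi⁻¹ < 1 := by
    rw [inv_phi_eq]; nlinarith [phi_lt']
  calc ∑ t ∈ S.image (fun i => (m - i).toNat), phi ^ m * (phi⁻¹) ^ t
      = phi ^ m * ∑ t ∈ S.image (fun i => (m - i).toNat), (phi⁻¹) ^ t := by
        rw [Finset.mul_sum]
    _ ≤ phi ^ m * (1 - phi⁻¹)⁻¹ := by
        apply mul_le_mul_of_nonneg_left (geom_nat_le hr0 hr1 _) (zpow_phi_nonneg m)
    _ = phi ^ (m + 2) := by
        have h1 : (1 - phi⁻¹) = (phi ^ (2:ℤ))⁻¹ := by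
          rw [inv_phi_eq]
          have : phi ^ (2:ℤ) = phi ^ (2:ℕ) := by norm_cast
          rw [this, phi_sq]
          have hpos : phi + 1 > 0 := by linarith [phi_pos]
          field_simp
          nlinarith [phi_mul_self]
        rw [h1, inv_inv, ← zpow_add₀ phi_ne_zero]
  
/-- Parity-restricted geometric bound: indices ≥ m, all ≡ m mod 2. -/
lemma sum_inv_parity_le {S : Finset ℤ} {m : ℤ} (h : ∀ i ∈ S, m ≤ i ∧ (2 ∣ i - m)) :
    ∑ i ∈ S, phi ^ (-i) ≤ phi ^ (1 - m) := by
  have hinj : ∀ x ∈ S, ∀ y ∈ S, ((x - m)/2).toNat = ((y - m)/2).toNat → x = y := by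
    intro x hx y hy hxy
    obtain ⟨h1, h2⟩ := h x hx; obtain ⟨h3, h4⟩ := h y hy
    omega
  have himg : ∑ t ∈ S.image (fun i => ((i - m)/2).toNat), phi ^ (-m) * ((phi⁻¹)^2) ^ t
      = ∑ i ∈ S, phi ^ (-m) * ((phi⁻¹)^2) ^ (((i - m)/2).toNat) := Finset.sum_image hinj
  have heq : ∑ i ∈ S, phi ^ (-i)
      = ∑ t ∈ S.image (fun i => ((i - m)/2).toNat), phi ^ (-m) * ((phi⁻¹)^2) ^ t := by
    rw [himg]
    refine Finset.sum_congr rfl (fun i hi => ?_)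
    obtain ⟨h1, h2⟩ := h i hi
    have h3 : (((i - m)/2).toNat : ℤ) = (i - m)/2 := Int.toNat_of_nonneg (by omega)
    have h4 : ((phi⁻¹)^2) ^ (((i - m)/2).toNat) = phi ^ (-(i - m)) := by
      rw [← pow_mul, inv_pow, ← zpow_natCast, ← zpow_neg]
      congr 1
      have h5 : (2 * ((i - m)/2).toNat : ℤ) = i - m := by
        push_cast [h3]; omega
      omega
    rw [h4, ← zpow_add₀ phi_ne_zero]
    congr 1
    ring
  rw [heq]
  have hr0 : (0:ℝ) ≤ (phi⁻¹)^2 := sq_nonneg _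
  have hr1 : (phi⁻¹)^2 < 1 := by
    have h1 : phi⁻¹ < 1 := by rw [inv_phi_eq]; nlinarith [phi_lt']
    have h0 : (0:ℝ) ≤ phi⁻¹ := le_of_lt (inv_pos.mpr phi_pos)
    nlinarith
  calc ∑ t ∈ S.image (fun i => ((i - m)/2).toNat), phi ^ (-m) * ((phi⁻¹)^2) ^ t
      = phi ^ (-m) * ∑ t ∈ S.image (fun i => ((i - m)/2).toNat), ((phi⁻¹)^2) ^ t := by
        rw [Finset.mul_sum]
    _ ≤ phi ^ (-m) * (1 - (phi⁻¹)^2)⁻¹ := by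
        apply mul_le_mul_of_nonneg_left (geom_nat_le hr0 hr1 _) (zpow_phi_nonneg _)
    _ = phi ^ (1 - m) := by
        have h1 : (1 - (phi⁻¹)^2)⁻¹ = phi := by
          rw [inv_phi_eq]
          have h2 : (1 - (phi - 1)^2) = phi⁻¹ := by
            rw [inv_phi_eq]; nlinarith [phi_mul_self]
          rw [h2, inv_inv]
        rw [h1, show (1 - m) = -m + 1 by ring, zpow_add₀ phi_ne_zero, zpow_one]

/-! ### The Knott condition on finsets, and basic bounds -/

/-- Knott condition: the minimal element j does not have pattern `j ∈ S, j+1 ∈ S, j+2 ∉ S`. -/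
def KC (S : Finset ℤ) : Prop :=
  ∀ j ∈ S, (∀ i ∈ S, j ≤ i) → ¬(j + 1 ∈ S ∧ j + 2 ∉ S)

instance (S : Finset ℤ) : Decidable (KC S) := by unfold KC; infer_instance

lemma kc_iff_min' {S : Finset ℤ} (hne : S.Nonempty) :
    KC S ↔ ¬(S.min' hne + 1 ∈ S ∧ S.min' hne + 2 ∉ S) := by
  constructor
  · intro h
    exact h (S.min' hne) (S.min'_mem hne) (fun i hi => S.min'_le i hi)
  · intro h j hj hmin
    have : j = S.min' hne := le_antisymm (hmin _ (S.min'_mem hne)) (S.min'_le j hj)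
    rwa [this]

lemma single_le_sumPhi {S : Finset ℤ} {i : ℤ} (hi : i ∈ S) : phi ^ i ≤ sumPhi S :=
  Finset.single_le_sum (fun j _ => zpow_phi_nonneg j) hi

lemma sumPhi_nonneg (S : Finset ℤ) : 0 ≤ sumPhi S :=
  Finset.sum_nonneg (fun j _ => zpow_phi_nonneg j)

lemma sumPhi_pos {S : Finset ℤ} (hne : S.Nonempty) : 0 < sumPhi S := by
  obtain ⟨i, hi⟩ := hne
  calc (0:ℝ) < phi ^ i := zpow_pos phi_pos i
    _ ≤ sumPhi S := single_le_sumPhi hi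

lemma sumPhi_nonempty {S : Finset ℤ} {x : ℝ} (hx : 0 < x) (h : sumPhi S = x) : S.Nonempty := by
  rcases S.eq_empty_or_nonempty with rfl | h'
  · exfalso; rw [show sumPhi ∅ = 0 from Finset.sum_empty] at h; linarith
  · exact h'

/-- Elements are bounded above: if φ^i ≤ x < φ^(m+1) then i ≤ m. -/
lemma mem_le_of_lt {S : Finset ℤ} {x : ℝ} {m i : ℤ} (h : sumPhi S = x)
    (hx : x < phi ^ (m + 1)) (hi : i ∈ S) : i ≤ m := by
  have h1 : phi ^ i ≤ x := h ▸ single_le_sumPhi hi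
  have h2 : phi ^ i < phi ^ (m+1) := lt_of_le_of_lt h1 hx
  have := (zpow_lt_zpow_iff_right₀ one_lt_phi).mp h2
  omega

/-- parity helpers -/
lemma neg_one_zpow_even {t : ℤ} (h : 2 ∣ t) : ((-1:ℝ)) ^ t = 1 :=
  Even.neg_one_zpow ⟨t/2, by omega⟩

lemma neg_one_zpow_odd {t : ℤ} (h : ¬ 2 ∣ t) : ((-1:ℝ)) ^ t = -1 :=
  Odd.neg_one_zpow ⟨t/2, by omega⟩

lemma psi_zpow_eq (i : ℤ) : psi ^ i = ((-1:ℝ)) ^ i * phi ^ (-i) := by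
  rw [psi_eq, show (-phi⁻¹) = (-1) * phi⁻¹ by ring, mul_zpow, inv_zpow, ← zpow_neg]

/-- The key lower bound for Knott representations: the minimal index can't be too low. -/
lemma bottom_bound {S : Finset ℤ} (hne : S.Nonempty) {n : ℕ}
    (hc1 : c1 S = n) (hc2 : c2 S = 0) (hK : KC S) :
    phi ^ (-(S.min' hne) - 2) ≤ (n : ℝ) := by
  set j := S.min' hne with hj
  have hjS : j ∈ S := S.min'_mem hne
  have hjmin : ∀ i ∈ S, j ≤ i := fun i hi => S.min'_le i hi
  have hT : sumPsi S = n := sumPsi_of_coords hc1 hc2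
  set E := S.filter (fun i => 2 ∣ (i - j)) with hE
  set O := S.filter (fun i => ¬ 2 ∣ (i - j)) with hO
  have hsplit : sumPsi S = ∑ i ∈ E, psi ^ i + ∑ i ∈ O, psi ^ i := by
    unfold sumPsi
    rw [hE, hO, Finset.sum_filter_add_sum_filter_not]
  have hEeq : ∑ i ∈ E, psi ^ i = ((-1:ℝ))^j * ∑ i ∈ E, phi ^ (-i) := by
    rw [Finset.mul_sum]
    refine Finset.sum_congr rfl (fun i hi => ?_)
    obtain ⟨_, hpar⟩ := Finset.mem_filter.mp hi
    rw [psi_zpow_eq]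
    congr 1
    have : ((-1:ℝ))^i = (-1)^(j + (i - j)) := by congr 1; ring
    rw [this, zpow_add₀ (by norm_num : (-1:ℝ) ≠ 0), neg_one_zpow_even hpar, mul_one]
  have hOeq : ∑ i ∈ O, psi ^ i = -((-1:ℝ))^j * ∑ i ∈ O, phi ^ (-i) := by
    have hterm : ∀ i ∈ O, psi ^ i = (-((-1:ℝ))^j) * phi^(-i) := by
      intro i hi
      obtain ⟨_, hpar⟩ := Finset.mem_filter.mp hi
      rw [psi_zpow_eq]
      congr 1
      have h5 : ((-1:ℝ))^i = (-1)^(j + (i - j)) := by congr 1; ring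
      rw [h5, zpow_add₀ (by norm_num : (-1:ℝ) ≠ 0), neg_one_zpow_odd hpar]
      ring
    rw [Finset.sum_congr rfl hterm, ← Finset.mul_sum]
  have hmain : (n:ℝ) = ((-1:ℝ))^j * (∑ i ∈ E, phi^(-i) - ∑ i ∈ O, phi^(-i)) := by
    rw [← hT, hsplit, hEeq, hOeq]; ring
  have ha : (0:ℝ) < phi ^ (-j-2) := zpow_pos phi_pos _
  have e0 : phi^(-j) = phi^(-j-2) * phi^(2:ℤ) := by
    rw [← zpow_add₀ phi_ne_zero]; congr 1; ring
  have e1 : phi^(-(j+1)) = phi^(-j-2) * phi^(1:ℤ) := by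
    rw [← zpow_add₀ phi_ne_zero]; congr 1; ring
  have e2 : phi^(-(j+2)) = phi^(-j-2) := by congr 1; ring
  have e3 : phi^(1-(j+3)) = phi^(-j-2) := by congr 1; ring
  have esq : phi^(2:ℤ) = phi + 1 := by
    rw [show (2:ℤ) = ((2:ℕ):ℤ) from rfl, zpow_natCast, phi_sq]
  have eone : phi^(1:ℤ) = phi := zpow_one phi
  have hEO : phi^(-j-2) ≤ ∑ i ∈ E, phi^(-i) - ∑ i ∈ O, phi^(-i) := by
    by_cases hj1 : j + 1 ∈ S
    · -- case B : j+1 ∈ S, hence j+2 ∈ S by the Knott condition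
      have hj2 : j + 2 ∈ S := by
        by_contra hj2
        exact ((kc_iff_min' hne).mp hK) ⟨hj1, hj2⟩
      have hjE : j ∈ E := Finset.mem_filter.mpr ⟨hjS, by omega⟩
      have hj2E : j + 2 ∈ E := Finset.mem_filter.mpr ⟨hj2, by omega⟩
      have hj1O : j + 1 ∈ O := Finset.mem_filter.mpr ⟨hj1, by omega⟩
      have hEb : phi^(-j) + phi^(-(j+2)) ≤ ∑ i ∈ E, phi^(-i) := by
        have hsub : ({j, j+2} : Finset ℤ) ⊆ E := by
          intro x hx
          rcases Finset.mem_insert.mp hx with rfl | hx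
          · exact hjE
          · rcases Finset.mem_singleton.mp hx with rfl
            exact hj2E
        have := Finset.sum_le_sum_of_subset_of_nonneg hsub
          (fun i _ _ => zpow_phi_nonneg (-i))
        rwa [Finset.sum_pair (by omega : j ≠ j + 2)] at this
      have hOb : ∑ i ∈ O, phi^(-i) ≤ phi^(-(j+1)) + phi^(-j-2) := by
        have hO1 : ∑ i ∈ O, phi^(-i) = phi^(-(j+1)) + ∑ i ∈ O.erase (j+1), phi^(-i) := by
          rw [← Finset.add_sum_erase _ _ hj1O]
        rw [hO1]
        have hOe : ∑ i ∈ O.erase (j+1), phi^(-i) ≤ phi^(1-(j+3)) := by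
          apply sum_inv_parity_le
          intro i hi
          obtain ⟨hne1, hiO⟩ := Finset.mem_erase.mp hi
          obtain ⟨hiS, hpar⟩ := Finset.mem_filter.mp hiO
          have := hjmin i hiS
          omega
        rw [e3] at hOe
        linarith
      rw [e0, e2, esq] at hEb
      rw [e1, eone] at hOb
      linarith
    · -- case A : j+1 ∉ S
      have hEb : phi^(-j) ≤ ∑ i ∈ E, phi^(-i) := by
        apply Finset.single_le_sum (fun i _ => zpow_phi_nonneg (-i))
        exact Finset.mem_filter.mpr ⟨hjS, by omega⟩
      have hOb : ∑ i ∈ O, phi^(-i) ≤ phi^(-j-2) := by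
        have hOe : ∑ i ∈ O, phi^(-i) ≤ phi^(1-(j+3)) := by
          apply sum_inv_parity_le
          intro i hi
          obtain ⟨hiS, hpar⟩ := Finset.mem_filter.mp hi
          have h6 := hjmin i hiS
          have h7 : i ≠ j + 1 := fun he => hj1 (he ▸ hiS)
          omega
        rwa [e3] at hOe
      rw [e0, esq] at hEb
      nlinarith [one_lt_phi, ha]
  rcases Int.even_or_odd j with hpar | hpar
  · rw [hpar.neg_one_zpow, one_mul] at hmain
    rw [show -(S.min' hne) - 2 = -j - 2 from rfl]
    linarith
  · exfalso
    rw [hpar.neg_one_zpow] at hmain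
    have hn : (0:ℝ) ≤ (n:ℝ) := Nat.cast_nonneg n
    linarith

/-! ### The set of Knott representations, as finsets -/

def KSet (n : ℕ) : Set (Finset ℤ) := {S | sumPhi S = n ∧ KC S}

def QSet (k : ℕ) : Set (Finset ℤ) := {S | S ∈ KSet (Nat.fib k) ∧ ((k:ℤ)-2) ∉ S}

lemma KSet_subset_window {n t : ℕ} (hn : 1 ≤ n) (ht : (n:ℝ) < phi ^ (t:ℤ)) :
    ∀ S ∈ KSet n, S ⊆ Finset.Icc (-(t:ℤ)-1) ((t:ℤ)-1) := by
  rintro S ⟨hrep, hkc⟩ i hi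
  have hne : S.Nonempty := sumPhi_nonempty (by exact_mod_cast Nat.cast_pos.mpr hn) hrep
  obtain ⟨hc1, hc2⟩ := rep_iff_coords.mp hrep
  have hup : i ≤ (t:ℤ) - 1 := by
    have := mem_le_of_lt hrep (by rw [show (t:ℤ)-1+1 = (t:ℤ) by ring]; exact ht) hi
    omega
  have hlow := bottom_bound hne hc1 hc2 hkc
  have hminlow : -(t:ℤ)-1 ≤ S.min' hne := by
    by_contra hc
    push_neg at hc
    have h2 : phi ^ (t:ℤ) ≤ phi ^ (-(S.min' hne) - 2) := by
      apply (zpow_le_zpow_iff_right₀ one_lt_phi).mpr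
      omega
    linarith
  have := S.min'_le i hi
  rw [Finset.mem_Icc]
  omega

lemma nat_lt_phi_pow (n : ℕ) : (n:ℝ) < phi ^ ((2*n : ℕ) : ℤ) := by
  induction n with
  | zero => norm_num
  | succ m ih =>
      have h1 : ((2*(m+1) : ℕ) : ℤ) = ((2*m : ℕ) : ℤ) + 2 := by push_cast; ring
      rw [h1, zpow_add₀ phi_ne_zero]
      have h2 : phi ^ (2:ℤ) = phi + 1 := by
        rw [show (2:ℤ) = ((2:ℕ):ℤ) from rfl, zpow_natCast, phi_sq]
      have h3 : (1:ℝ) ≤ phi ^ ((2*m:ℕ):ℤ) := one_le_zpow₀ (le_of_lt one_lt_phi) (by positivity)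
      rw [h2]
      have hc : ((m+1:ℕ):ℝ) = (m:ℝ)+1 := by push_cast; ring
      rw [hc]
      have h4 : phi ^ ((2*m:ℕ):ℤ) * 2 ≤ phi ^ ((2*m:ℕ):ℤ) * (phi + 1) := by
        apply mul_le_mul_of_nonneg_left (by nlinarith [one_lt_phi]) (by positivity)
      linarith

lemma KSet_finite {n : ℕ} (hn : 1 ≤ n) : (KSet n).Finite := by
  have ht := nat_lt_phi_pow n
  apply Set.Finite.subset ((Finset.Icc (-((2*n:ℕ):ℤ)-1) (((2*n:ℕ):ℤ)-1)).powerset.finite_toSet)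
  intro S hS
  rw [Finset.mem_coe, Finset.mem_powerset]
  exact KSet_subset_window hn ht S hS

lemma KSet_eq_filter (n t : ℕ) (hn : 1 ≤ n) (ht : (n:ℝ) < phi ^ (t:ℤ)) :
    KSet n = ↑(((Finset.Icc (-(t:ℤ)-1) ((t:ℤ)-1)).powerset).filter
      (fun S => c1 S = n ∧ c2 S = 0 ∧ KC S)) := by
  ext S
  simp only [Finset.coe_filter, Finset.mem_powerset, Set.mem_setOf_eq]
  constructor
  · rintro ⟨hrep, hkc⟩
    obtain ⟨hc1, hc2⟩ := rep_iff_coords.mp hrep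
    exact ⟨KSet_subset_window hn ht S ⟨hrep, hkc⟩, hc1, hc2, hkc⟩
  · rintro ⟨hsub, hc1, hc2, hkc⟩
    exact ⟨rep_iff_coords.mpr ⟨hc1, hc2⟩, hkc⟩

/-! ### Shifts, Fibonacci identities and inequalities -/

def shiftF (c : ℤ) (S : Finset ℤ) : Finset ℤ := S.image (· + c)

lemma mem_shiftF {c : ℤ} {S : Finset ℤ} {i : ℤ} : i ∈ shiftF c S ↔ i - c ∈ S := by
  unfold shiftF
  simp only [Finset.mem_image]
  constructor
  · rintro ⟨a, ha, rfl⟩; simpa using ha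
  · intro h; exact ⟨i - c, h, by ring⟩

lemma shiftF_shiftF (c d : ℤ) (S : Finset ℤ) : shiftF c (shiftF d S) = S.image (· + (d + c)) := by
  unfold shiftF
  rw [Finset.image_image]
  congr 1
  funext x
  simp [add_assoc]

lemma shiftF_cancel (c : ℤ) (S : Finset ℤ) : shiftF c (shiftF (-c) S) = S := by
  rw [shiftF_shiftF]
  simp

lemma shiftF_cancel' (c : ℤ) (S : Finset ℤ) : shiftF (-c) (shiftF c S) = S := by
  rw [shiftF_shiftF]
  simp

lemma sumPhi_shiftF (c : ℤ) (S : Finset ℤ) : sumPhi (shiftF c S) = phi ^ c * sumPhi S := by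
  unfold sumPhi shiftF
  rw [Finset.sum_image (by intro x _ y _ h; simp only at h; omega), Finset.mul_sum]
  exact Finset.sum_congr rfl fun i _ => by rw [← zpow_add₀ phi_ne_zero]; congr 1; ring

lemma shiftF_nonempty {c : ℤ} {S : Finset ℤ} (h : S.Nonempty) : (shiftF c S).Nonempty :=
  h.image _

lemma min'_shiftF (c : ℤ) {S : Finset ℤ} (h : S.Nonempty) :
    (shiftF c S).min' (shiftF_nonempty h) = S.min' h + c := by
  apply le_antisymm
  · exact Finset.min'_le _ _ (mem_shiftF.mpr (by simpa using S.min'_mem h))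
  · apply Finset.le_min'
    intro y hy
    have := S.min'_le _ (mem_shiftF.mp hy)
    omega

lemma KC_shiftF {c : ℤ} {S : Finset ℤ} (h : KC S) : KC (shiftF c S) := by
  intro j hj hmin
  have hj' : j - c ∈ S := mem_shiftF.mp hj
  have hmin' : ∀ i ∈ S, j - c ≤ i := by
    intro i hi
    have := hmin (i + c) (mem_shiftF.mpr (by simpa using hi))
    omega
  have := h (j - c) hj' hmin'
  rw [not_and_or] at this ⊢
  rcases this with h1 | h2
  · left; intro hc; exact h1 (by rw [show j - c + 1 = j + 1 - c by ring] at *; exact mem_shiftF.mp hc)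
  · right
    rw [not_not] at h2 ⊢
    apply mem_shiftF.mpr
    rw [show j + 2 - c = j - c + 2 by ring]
    exact h2

lemma KC_shiftF_iff (c : ℤ) (S : Finset ℤ) : KC (shiftF c S) ↔ KC S := by
  constructor
  · intro h
    have := KC_shiftF (c := -c) h
    rwa [shiftF_cancel'] at this
  · exact KC_shiftF

lemma phi_z2 : phi ^ (2:ℤ) = phi + 1 := by
  rw [show (2:ℤ) = ((2:ℕ):ℤ) from rfl, zpow_natCast, phi_sq]
lemma phi_zm2 : phi ^ (-2:ℤ) = 2 - phi := by
  rw [phi_zpow]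
  have h1 : fz (-2-1) = 2 := by decide
  have h2 : fz (-2) = -1 := by decide
  rw [h1, h2]
  push_cast
  ring
lemma phi_z3 : phi ^ (3:ℤ) = 2*phi + 1 := by
  rw [show (3:ℤ) = 1+2 by norm_num, zpow_add₀ phi_ne_zero, zpow_one, phi_z2]
  nlinarith [phi_mul_self]

/-- φ^(t+2) = φ^(t+1) + φ^t -/
lemma phi_zpow_rec (t : ℤ) : phi ^ (t+2) = phi ^ (t+1) + phi ^ t := by
  rw [zpow_add₀ phi_ne_zero, zpow_add₀ phi_ne_zero, phi_z2, zpow_one]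
  ring

/-- F_{m+3} = φ^{m+1} + φ^{-2} F_{m+1} -/
lemma fib_ident (m : ℕ) :
    (Nat.fib (m+3) : ℝ) = phi ^ ((m:ℤ)+1) + phi ^ (-2:ℤ) * (Nat.fib (m+1) : ℝ) := by
  rw [phi_zm2, phi_zpow]
  have e1 : (m:ℤ) + 1 - 1 = ((m:ℕ):ℤ) := by ring
  have e2 : (m:ℤ) + 1 = ((m+1:ℕ):ℤ) := by push_cast; ring
  rw [e1, e2, fz_natCast, fz_natCast]
  have hf : (Nat.fib (m+3) : ℝ) = Nat.fib m + 2 * Nat.fib (m+1) := by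
    have h1 : Nat.fib (m+3) = Nat.fib (m+1) + Nat.fib (m+2) := Nat.fib_add_two
    have h2 : Nat.fib (m+2) = Nat.fib m + Nat.fib (m+1) := Nat.fib_add_two
    rw [h1, h2]; push_cast; ring
  rw [hf]
  push_cast
  ring

lemma fib_ge_two {r : ℕ} (hr : 3 ≤ r) : 2 ≤ Nat.fib r :=
  le_trans (by norm_num) (Nat.fib_mono hr)

lemma fib_ge_one {r : ℕ} (hr : 1 ≤ r) : 1 ≤ Nat.fib r :=
  Nat.fib_pos.mpr hr

/-- key impossibility: φ^{-2}·F_{k'} is never a pure power of φ for k' ≥ 3 -/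
lemma not_power {k' : ℕ} (hk' : 3 ≤ k') {b : ℤ}
    (h : phi ^ b = phi ^ (-2:ℤ) * (Nat.fib k' : ℝ)) : False := by
  have h2 : phi ^ (b + 2) = (Nat.fib k' : ℝ) := by
    rw [zpow_add₀ phi_ne_zero, h]
    have h4 : phi ^ (-2:ℤ) * phi ^ (2:ℤ) = 1 := by
      rw [← zpow_add₀ phi_ne_zero]; norm_num
    linear_combination (Nat.fib k' : ℝ) * h4
  obtain ⟨_, h3⟩ := zpow_eq_nat h2
  have := fib_ge_two hk'
  omega

/-- strict lower bound φ^{k-2} < F_k for k ≥ 3, stated as m+3 -/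
lemma fibL (m : ℕ) : phi ^ ((m:ℤ)+1) < (Nat.fib (m+3) : ℝ) := by
  induction m using Nat.strong_induction_on with
  | _ m ih =>
    match m with
    | 0 =>
      have e : ((0:ℕ):ℤ)+1 = 1 := by norm_num
      have hf : Nat.fib 3 = 2 := by decide
      rw [e, zpow_one, show (0+3) = 3 from rfl, hf]
      norm_num
      nlinarith [phi_lt']
    | 1 =>
      have e : ((1:ℕ):ℤ)+1 = 2 := by norm_num
      have hf : Nat.fib 4 = 3 := by decide
      rw [e, phi_z2, show (1+3) = 4 from rfl, hf]
      norm_num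
      nlinarith [phi_lt']
    | (m+2) =>
      have h1 := ih m (by omega)
      have h2 := ih (m+1) (by omega)
      have e : ((m+2:ℕ):ℤ)+1 = ((m:ℤ)+1) + 2 := by push_cast; ring
      rw [e, phi_zpow_rec]
      have e2 : ((m+1:ℕ):ℤ)+1 = ((m:ℤ)+1)+1 := by push_cast; ring
      rw [e2] at h2
      have hf : Nat.fib (m+5) = Nat.fib (m+3) + Nat.fib (m+4) := Nat.fib_add_two
      have e3 : ((m+2)+3) = m+5 := by omega
      rw [e3, hf]
      push_cast
      linarith

/-- strict upper bound F_k < φ^{k-1} for k ≥ 2, stated as m+2 -/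
lemma fibU (m : ℕ) : (Nat.fib (m+2) : ℝ) < phi ^ ((m:ℤ)+1) := by
  induction m using Nat.strong_induction_on with
  | _ m ih =>
    match m with
    | 0 =>
      have e : ((0:ℕ):ℤ)+1 = 1 := by norm_num
      have hf : Nat.fib 2 = 1 := by decide
      rw [e, zpow_one, show (0+2) = 2 from rfl, hf]
      norm_num
      nlinarith [phi_gt']
    | 1 =>
      have e : ((1:ℕ):ℤ)+1 = 2 := by norm_num
      have hf : Nat.fib 3 = 2 := by decide
      rw [e, phi_z2, show (1+2) = 3 from rfl, hf]
      norm_num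
      nlinarith [phi_gt']
    | (m+2) =>
      have h1 := ih m (by omega)
      have h2 := ih (m+1) (by omega)
      have e : ((m+2:ℕ):ℤ)+1 = ((m:ℤ)+1) + 2 := by push_cast; ring
      rw [e, phi_zpow_rec]
      have e2 : ((m+1:ℕ):ℤ)+1 = ((m:ℤ)+1)+1 := by push_cast; ring
      rw [e2] at h2
      have hf : Nat.fib (m+4) = Nat.fib (m+2) + Nat.fib (m+3) := Nat.fib_add_two
      have e3 : ((m+2)+2) = m+4 := by omega
      rw [e3, hf]
      push_cast
      linarith

/-- F_k < 2 φ^{k-3} for k ≥ 5, stated as m+5 -/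
lemma fibU2 (m : ℕ) : (Nat.fib (m+5) : ℝ) < 2 * phi ^ ((m:ℤ)+2) := by
  induction m using Nat.strong_induction_on with
  | _ m ih =>
    match m with
    | 0 =>
      have e : ((0:ℕ):ℤ)+2 = 2 := by norm_num
      have hf : Nat.fib 5 = 5 := by decide
      rw [e, phi_z2, show (0+5) = 5 from rfl, hf]
      norm_num
      nlinarith [phi_gt']
    | 1 =>
      have e : ((1:ℕ):ℤ)+2 = 3 := by norm_num
      have hf : Nat.fib 6 = 8 := by decide
      rw [e, phi_z3, show (1+5) = 6 from rfl, hf]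
      norm_num
      nlinarith [phi_gt']
    | (m+2) =>
      have h1 := ih m (by omega)
      have h2 := ih (m+1) (by omega)
      have e : ((m+2:ℕ):ℤ)+2 = ((m:ℤ)+2) + 2 := by push_cast; ring
      rw [e, phi_zpow_rec]
      have e2 : ((m+1:ℕ):ℤ)+2 = ((m:ℤ)+2)+1 := by push_cast; ring
      rw [e2] at h2
      have hf : Nat.fib (m+7) = Nat.fib (m+5) + Nat.fib (m+6) := Nat.fib_add_two
      have e3 : ((m+2)+5) = m+7 := by omega
      rw [e3, hf]
      push_cast
      linarith

/-- φ^{k-3} + 2φ^{k-5} < F_k for k ≥ 5, stated as m+5 -/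
lemma fibL2 (m : ℕ) : phi ^ ((m:ℤ)+2) + 2 * phi ^ ((m:ℤ)) < (Nat.fib (m+5) : ℝ) := by
  induction m using Nat.strong_induction_on with
  | _ m ih =>
    match m with
    | 0 =>
      have e : ((0:ℕ):ℤ)+2 = 2 := by norm_num
      have e0 : ((0:ℕ):ℤ) = 0 := by norm_num
      have hf : Nat.fib 5 = 5 := by decide
      rw [e, e0, phi_z2, zpow_zero, show (0+5) = 5 from rfl, hf]
      norm_num
      nlinarith [phi_lt']
    | 1 =>
      have e : ((1:ℕ):ℤ)+2 = 3 := by norm_num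
      have e0 : ((1:ℕ):ℤ) = 1 := by norm_num
      have hf : Nat.fib 6 = 8 := by decide
      rw [e, e0, phi_z3, zpow_one, show (1+5) = 6 from rfl, hf]
      norm_num
      nlinarith [phi_lt']
    | (m+2) =>
      have h1 := ih m (by omega)
      have h2 := ih (m+1) (by omega)
      have e : ((m+2:ℕ):ℤ)+2 = ((m:ℤ)+2) + 2 := by push_cast; ring
      have e' : ((m+2:ℕ):ℤ) = ((m:ℤ)) + 2 := by push_cast; ring
      rw [e, e', phi_zpow_rec, phi_zpow_rec (m:ℤ)]
      have e2 : ((m+1:ℕ):ℤ)+2 = ((m:ℤ)+2)+1 := by push_cast; ring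
      have e2' : ((m+1:ℕ):ℤ) = ((m:ℤ))+1 := by push_cast; ring
      rw [e2, e2'] at h2
      have hf : Nat.fib (m+7) = Nat.fib (m+5) + Nat.fib (m+6) := Nat.fib_add_two
      have e3 : ((m+2)+5) = m+7 := by omega
      rw [e3, hf]
      have hr := phi_zpow_rec (m:ℤ)
      push_cast
      linarith

/-! ### Gluing machinery -/

lemma fibL' {k : ℕ} (hk : 3 ≤ k) : phi ^ ((k:ℤ)-2) < (Nat.fib k : ℝ) := by
  have h := fibL (k-3)
  have e : ((k-3:ℕ):ℤ)+1 = (k:ℤ)-2 := by omega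
  have e2 : (k-3)+3 = k := by omega
  rw [e, e2] at h; exact h

lemma fibU' {k : ℕ} (hk : 2 ≤ k) : (Nat.fib k : ℝ) < phi ^ ((k:ℤ)-1) := by
  have h := fibU (k-2)
  have e : ((k-2:ℕ):ℤ)+1 = (k:ℤ)-1 := by omega
  have e2 : (k-2)+2 = k := by omega
  rw [e, e2] at h; exact h

lemma fibU2' {k : ℕ} (hk : 5 ≤ k) : (Nat.fib k : ℝ) < 2 * phi ^ ((k:ℤ)-3) := by
  have h := fibU2 (k-5)
  have e : ((k-5:ℕ):ℤ)+2 = (k:ℤ)-3 := by omega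
  have e2 : (k-5)+5 = k := by omega
  rw [e, e2] at h; exact h

lemma fibL2' {k : ℕ} (hk : 5 ≤ k) :
    phi ^ ((k:ℤ)-3) + 2 * phi ^ ((k:ℤ)-5) < (Nat.fib k : ℝ) := by
  have h := fibL2 (k-5)
  have e : ((k-5:ℕ):ℤ)+2 = (k:ℤ)-3 := by omega
  have e' : ((k-5:ℕ):ℤ) = (k:ℤ)-5 := by omega
  have e2 : (k-5)+5 = k := by omega
  rw [e, e', e2] at h; exact h

lemma fib_ident' {k : ℕ} (hk : 3 ≤ k) :
    (Nat.fib k : ℝ) = phi ^ ((k:ℤ)-2) + phi ^ (-2:ℤ) * (Nat.fib (k-2) : ℝ) := by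
  have h := fib_ident (k-3)
  have e : ((k-3:ℕ):ℤ)+1 = (k:ℤ)-2 := by omega
  have e2 : (k-3)+3 = k := by omega
  have e3 : (k-3)+1 = k-2 := by omega
  rw [e, e2, e3] at h; exact h

lemma KSet_elem_le {k' : ℕ} (hk' : 2 ≤ k') {T : Finset ℤ} (hT : T ∈ KSet (Nat.fib k')) :
    ∀ i ∈ T, i ≤ (k':ℤ) - 2 := by
  intro i hi
  have h := fibU' hk'
  have := mem_le_of_lt hT.1 (by rw [show (k':ℤ)-2+1 = (k':ℤ)-1 by ring]; exact h) hi
  exact this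

lemma KSet_nonempty {n : ℕ} (hn : 1 ≤ n) {T : Finset ℤ} (hT : T ∈ KSet n) : T.Nonempty :=
  sumPhi_nonempty (by exact_mod_cast Nat.cast_pos.mpr hn) hT.1

lemma sumPhi_erase {S : Finset ℤ} {a : ℤ} (h : a ∈ S) :
    sumPhi (S.erase a) = sumPhi S - phi ^ a := by
  have := Finset.add_sum_erase S (fun i => phi ^ i) h
  unfold sumPhi at *
  linarith

lemma sumPhi_insert {S : Finset ℤ} {a : ℤ} (h : a ∉ S) :
    sumPhi (insert a S) = phi ^ a + sumPhi S := Finset.sum_insert h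

lemma sub_extract {k : ℕ} (hk : 5 ≤ k) {S₀ : Finset ℤ}
    (hsum : sumPhi S₀ = phi ^ (-2:ℤ) * (Nat.fib (k-2) : ℝ)) :
    S₀.Nonempty ∧ (∀ i ∈ S₀, i ≤ (k:ℤ)-6) := by
  have hf1 : (1:ℝ) ≤ (Nat.fib (k-2) : ℝ) := by
    exact_mod_cast fib_ge_one (by omega)
  have hpos : (0:ℝ) < phi ^ (-2:ℤ) * (Nat.fib (k-2) : ℝ) := by
    have := zpow_pos phi_pos (-2:ℤ)
    nlinarith
  constructor
  · exact sumPhi_nonempty hpos hsum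
  · intro i hi
    apply mem_le_of_lt hsum ?_ hi
    have h1 : (Nat.fib (k-2) : ℝ) < phi ^ ((k:ℤ)-3) := by
      have := fibU' (k := k-2) (by omega)
      have e : ((k-2:ℕ):ℤ)-1 = (k:ℤ)-3 := by omega
      rwa [e] at this
    have h2 : phi ^ (-2:ℤ) * (Nat.fib (k-2):ℝ) < phi ^ (-2:ℤ) * phi ^ ((k:ℤ)-3) :=
      mul_lt_mul_of_pos_left h1 (zpow_pos phi_pos _)
    have h3 : phi ^ (-2:ℤ) * phi ^ ((k:ℤ)-3) = phi ^ ((k:ℤ)-6+1) := by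
      rw [← zpow_add₀ phi_ne_zero]; congr 1; ring
    linarith [h2, h3.symm.le]

lemma min_gap {k' : ℕ} (hk' : 3 ≤ k') {S₀ : Finset ℤ} (hne : S₀.Nonempty) {b : ℤ}
    (hle : ∀ i ∈ S₀, i ≤ b) (hsum : sumPhi S₀ = phi ^ (-2:ℤ) * (Nat.fib k' : ℝ)) :
    S₀.min' hne ≤ b - 2 := by
  by_contra hcon
  push_neg at hcon
  have hjb : S₀.min' hne ≤ b := hle _ (S₀.min'_mem hne)
  have hcase : S₀.min' hne = b ∨ S₀.min' hne = b - 1 := by omega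
  rcases hcase with hj | hj
  · have hSb : S₀ = {b} := by
      apply Finset.eq_singleton_iff_unique_mem.mpr
      refine ⟨hj ▸ S₀.min'_mem hne, fun x hx => le_antisymm (hle x hx) ?_⟩
      have := S₀.min'_le x hx
      omega
    rw [hSb, show sumPhi {b} = phi ^ b from Finset.sum_singleton _ _] at hsum
    exact not_power hk' hsum
  · by_cases hbS : b ∈ S₀
    · have hSb : S₀ = {b-1, b} := by
        apply Finset.Subset.antisymm
        · intro x hx
          have h1 := hle x hx
          have h2 := S₀.min'_le x hx
          simp only [Finset.mem_insert, Finset.mem_singleton]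
          omega
        · intro x hx
          simp only [Finset.mem_insert, Finset.mem_singleton] at hx
          rcases hx with rfl | rfl
          · exact hj ▸ S₀.min'_mem hne
          · exact hbS
      rw [hSb, show sumPhi {b-1, b} = phi^(b-1) + phi^b from Finset.sum_pair (by omega)] at hsum
      have hkey : phi ^ (b+1) = phi^(-2:ℤ) * (Nat.fib k' : ℝ) := by
        rw [show b+1 = (b-1)+2 by ring, phi_zpow_rec, show (b-1)+1 = b by ring]
        linarith
      exact not_power hk' hkey
    · have hSb : S₀ = {b-1} := by
        apply Finset.eq_singleton_iff_unique_mem.mpr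
        refine ⟨hj ▸ S₀.min'_mem hne, fun x hx => ?_⟩
        have h1 := hle x hx
        have h2 := S₀.min'_le x hx
        have h3 : x ≠ b := fun h => hbS (h ▸ hx)
        omega
      rw [hSb, show sumPhi {b-1} = phi ^ (b-1) from Finset.sum_singleton _ _] at hsum
      exact not_power hk' hsum

lemma min_union_chunk {S₀ C : Finset ℤ} (hne : S₀.Nonempty) (hneU : (S₀ ∪ C).Nonempty)
    (h : ∀ c ∈ C, S₀.min' hne ≤ c) : (S₀ ∪ C).min' hneU = S₀.min' hne := by
  apply le_antisymm
  · exact Finset.min'_le _ _ (Finset.mem_union_left _ (S₀.min'_mem hne))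
  · apply Finset.le_min'
    intro y hy
    rcases Finset.mem_union.mp hy with h' | h'
    · exact S₀.min'_le _ h'
    · exact h y h'

lemma glue_KC {k : ℕ} (hk : 5 ≤ k) {S₀ C : Finset ℤ} {b : ℤ}
    (hsum : sumPhi S₀ = phi ^ (-2:ℤ) * (Nat.fib (k-2) : ℝ))
    (hb : ∀ i ∈ S₀, i ≤ b) (hC : ∀ c ∈ C, b < c) :
    KC (S₀ ∪ C) ↔ KC S₀ := by
  have hne0 : S₀.Nonempty := (sub_extract hk hsum).1
  have hj := min_gap (show 3 ≤ k-2 by omega) hne0 hb hsum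
  have hneU : (S₀ ∪ C).Nonempty := hne0.mono Finset.subset_union_left
  have hmin : (S₀ ∪ C).min' hneU = S₀.min' hne0 := by
    apply min_union_chunk
    intro c hc
    have h1 := hC c hc
    have h2 : S₀.min' hne0 ≤ b := hb _ (S₀.min'_mem hne0)
    omega
  rw [kc_iff_min' hneU, kc_iff_min' hne0, hmin]
  have h1 : S₀.min' hne0 + 1 ∈ S₀ ∪ C ↔ S₀.min' hne0 + 1 ∈ S₀ := by
    rw [Finset.mem_union]
    constructor
    · rintro (h' | h')
      · exact h'
      · exfalso; have := hC _ h'; omega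
    · exact Or.inl
  have h2 : S₀.min' hne0 + 2 ∈ S₀ ∪ C ↔ S₀.min' hne0 + 2 ∈ S₀ := by
    rw [Finset.mem_union]
    constructor
    · rintro (h' | h')
      · exact h'
      · exfalso; have := hC _ h'; omega
    · exact Or.inl
  rw [h1, h2]

lemma insert1_eq (a : ℤ) (S : Finset ℤ) : insert a S = S ∪ {a} := by
  ext x; simp [or_comm]
lemma insert2_eq (a b : ℤ) (S : Finset ℤ) : insert a (insert b S) = S ∪ {a, b} := by
  ext x; simp
lemma insert3_eq (a b c : ℤ) (S : Finset ℤ) :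
    insert a (insert b (insert c S)) = S ∪ {a, b, c} := by
  ext x; simp

/-- Case analysis helper: if the top digit k-2 is absent then k-3 is present and is the max. -/
lemma top_eq {k : ℕ} (hk : 5 ≤ k) {S : Finset ℤ} (hS : S ∈ KSet (Nat.fib k))
    (h2 : ((k:ℤ)-2) ∉ S) : ((k:ℤ)-3) ∈ S ∧ (∀ i ∈ S, i ≤ (k:ℤ)-3) := by
  have hne : S.Nonempty := KSet_nonempty (fib_ge_one (by omega)) hS
  have hel : ∀ i ∈ S, i ≤ (k:ℤ)-2 := KSet_elem_le (by omega) hS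
  have hel3 : ∀ i ∈ S, i ≤ (k:ℤ)-3 := by
    intro i hi
    have := hel i hi
    have : i ≠ (k:ℤ)-2 := fun h => h2 (h ▸ hi)
    omega
  have hup : (Nat.fib k : ℝ) ≤ phi ^ (S.max' hne + 2) := by
    rw [← hS.1]
    exact sumPhi_le (fun i hi => S.le_max' i hi)
  have hlow := fibL' (k := k) (by omega)
  have hmax : (k:ℤ)-3 ≤ S.max' hne := by
    by_contra hcon
    push_neg at hcon
    have : phi ^ ((k:ℤ)-2) < phi ^ (S.max' hne + 2) := lt_of_lt_of_le hlow hup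
    have := (zpow_lt_zpow_iff_right₀ one_lt_phi).mp this
    omega
  have hmem := S.max'_mem hne
  have := hel3 _ hmem
  have heq : S.max' hne = (k:ℤ)-3 := by omega
  exact ⟨heq ▸ hmem, hel3⟩

/-! ### The three step bijections -/

lemma stepA {k : ℕ} (hk : 5 ≤ k) :
    {S | S ∈ KSet (Nat.fib k) ∧ ((k:ℤ)-2) ∈ S}
      = (fun T => insert ((k:ℤ)-2) (shiftF (-2) T)) '' KSet (Nat.fib (k-2)) := by
  have hid := fib_ident' (k := k) (by omega)
  ext S
  simp only [Set.mem_setOf_eq, Set.mem_image]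
  constructor
  · rintro ⟨⟨hrep, hkc⟩, hmem⟩
    have hsum0 : sumPhi (S.erase ((k:ℤ)-2)) = phi ^ (-2:ℤ) * (Nat.fib (k-2) : ℝ) := by
      rw [sumPhi_erase hmem, hrep, hid]; ring
    obtain ⟨hne0, hb0⟩ := sub_extract hk hsum0
    refine ⟨shiftF 2 (S.erase ((k:ℤ)-2)), ⟨?_, ?_⟩, ?_⟩
    · rw [sumPhi_shiftF, hsum0, ← mul_assoc, ← zpow_add₀ phi_ne_zero]
      norm_num
    · rw [KC_shiftF_iff]
      have hins : S.erase ((k:ℤ)-2) ∪ {(k:ℤ)-2} = S := by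
        rw [← insert1_eq, Finset.insert_erase hmem]
      have := (glue_KC hk hsum0 hb0 (C := {(k:ℤ)-2})
        (by intro c hc; rw [Finset.mem_singleton] at hc; omega)).mp
      apply this
      rwa [hins]
    · rw [shiftF_cancel']
      exact Finset.insert_erase hmem
  · rintro ⟨T, hT, rfl⟩
    have hTne : T.Nonempty := KSet_nonempty (fib_ge_one (by omega)) hT
    have hTel : ∀ i ∈ T, i ≤ (k:ℤ)-4 := by
      intro i hi
      have := KSet_elem_le (k' := k-2) (by omega) hT i hi
      omega
    have hb0 : ∀ i ∈ shiftF (-2) T, i ≤ (k:ℤ)-6 := by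
      intro i hi
      have := hTel _ (mem_shiftF.mp hi)
      omega
    have hsum0 : sumPhi (shiftF (-2) T) = phi ^ (-2:ℤ) * (Nat.fib (k-2) : ℝ) := by
      rw [sumPhi_shiftF, hT.1]
    have hnm : ((k:ℤ)-2) ∉ shiftF (-2) T := fun h => by have := hb0 _ h; omega
    refine ⟨⟨?_, ?_⟩, Finset.mem_insert_self _ _⟩
    · rw [sumPhi_insert hnm, hsum0, hid]
    · rw [insert1_eq]
      rw [glue_KC hk hsum0 hb0 (C := {(k:ℤ)-2})
        (by intro c hc; rw [Finset.mem_singleton] at hc; omega)]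
      rw [KC_shiftF_iff]
      exact hT.2

lemma force_top {S₁ : Finset ℤ} {x : ℝ} (hrep : sumPhi S₁ = x) {u : ℤ}
    (hel : ∀ i ∈ S₁, i ≤ u) (hlow : phi ^ (u+1) < x) : u ∈ S₁ := by
  have hne : S₁.Nonempty := sumPhi_nonempty (lt_trans (zpow_pos phi_pos _) hlow) hrep
  have hup : x ≤ phi ^ (S₁.max' hne + 2) := by
    rw [← hrep]; exact sumPhi_le (fun i hi => S₁.le_max' i hi)
  have h1 : phi ^ (u+1) < phi ^ (S₁.max' hne + 2) := lt_of_lt_of_le hlow hup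
  have h2 := (zpow_lt_zpow_iff_right₀ one_lt_phi).mp h1
  have h3 := hel _ (S₁.max'_mem hne)
  have : S₁.max' hne = u := by omega
  exact this ▸ S₁.max'_mem hne

lemma stepB {k : ℕ} (hk : 5 ≤ k) :
    {S | S ∈ KSet (Nat.fib k) ∧ ((k:ℤ)-2) ∉ S ∧ ((k:ℤ)-4) ∈ S}
      = (fun T => insert ((k:ℤ)-3) (insert ((k:ℤ)-4) (shiftF (-2) T))) '' KSet (Nat.fib (k-2)) := by
  have hid := fib_ident' (k := k) (by omega)
  have hrec : phi ^ ((k:ℤ)-3) + phi ^ ((k:ℤ)-4) = phi ^ ((k:ℤ)-2) := by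
    have := phi_zpow_rec ((k:ℤ)-4)
    rw [show (k:ℤ)-4+2 = (k:ℤ)-2 by ring, show (k:ℤ)-4+1 = (k:ℤ)-3 by ring] at this
    linarith
  have hCgt : ∀ c ∈ ({(k:ℤ)-3, (k:ℤ)-4} : Finset ℤ), (k:ℤ)-6 < c := by
    intro c hc
    rcases Finset.mem_insert.mp hc with rfl | hc
    · omega
    · rw [Finset.mem_singleton] at hc; omega
  ext S
  simp only [Set.mem_setOf_eq, Set.mem_image]
  constructor
  · rintro ⟨hS, h2, h4⟩
    obtain ⟨h3, hel3⟩ := top_eq hk hS h2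
    obtain ⟨hrep, hkc⟩ := hS
    have h4' : ((k:ℤ)-4) ∈ S.erase ((k:ℤ)-3) := Finset.mem_erase.mpr ⟨by omega, h4⟩
    have hsum0 : sumPhi ((S.erase ((k:ℤ)-3)).erase ((k:ℤ)-4))
        = phi ^ (-2:ℤ) * (Nat.fib (k-2) : ℝ) := by
      rw [sumPhi_erase h4', sumPhi_erase h3, hrep, hid]
      linarith
    obtain ⟨hne0, hb0⟩ := sub_extract hk hsum0
    have hunion : (S.erase ((k:ℤ)-3)).erase ((k:ℤ)-4) ∪ {(k:ℤ)-3, (k:ℤ)-4} = S := by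
      rw [← insert2_eq, Finset.insert_erase h4', Finset.insert_erase h3]
    refine ⟨shiftF 2 ((S.erase ((k:ℤ)-3)).erase ((k:ℤ)-4)), ⟨?_, ?_⟩, ?_⟩
    · rw [sumPhi_shiftF, hsum0, ← mul_assoc, ← zpow_add₀ phi_ne_zero]
      norm_num
    · rw [KC_shiftF_iff]
      exact (glue_KC hk hsum0 hb0 hCgt).mp (by rwa [hunion])
    · rw [shiftF_cancel', Finset.insert_erase h4', Finset.insert_erase h3]
  · rintro ⟨T, hT, rfl⟩
    have hTel : ∀ i ∈ T, i ≤ (k:ℤ)-4 := by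
      intro i hi
      have := KSet_elem_le (k' := k-2) (by omega) hT i hi
      omega
    have hb0 : ∀ i ∈ shiftF (-2) T, i ≤ (k:ℤ)-6 := by
      intro i hi
      have := hTel _ (mem_shiftF.mp hi)
      omega
    have hsum0 : sumPhi (shiftF (-2) T) = phi ^ (-2:ℤ) * (Nat.fib (k-2) : ℝ) := by
      rw [sumPhi_shiftF, hT.1]
    have hn4 : ((k:ℤ)-4) ∉ shiftF (-2) T := fun h => by have := hb0 _ h; omega
    have hn3 : ((k:ℤ)-3) ∉ insert ((k:ℤ)-4) (shiftF (-2) T) := by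
      intro h
      rcases Finset.mem_insert.mp h with h | h
      · omega
      · have := hb0 _ h; omega
    refine ⟨⟨?_, ?_⟩, ?_, ?_⟩
    · rw [sumPhi_insert hn3, sumPhi_insert hn4, hsum0, hid]
      linarith
    · rw [insert2_eq]
      rw [glue_KC hk hsum0 hb0 hCgt, KC_shiftF_iff]
      exact hT.2
    · intro h
      rcases Finset.mem_insert.mp h with h | h
      · omega
      · rcases Finset.mem_insert.mp h with h | h
        · omega
        · have := hb0 _ h; omega
    · exact Finset.mem_insert_of_mem (Finset.mem_insert_self _ _)

lemma stepC {k : ℕ} (hk : 5 ≤ k) :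
    {S | S ∈ KSet (Nat.fib k) ∧ ((k:ℤ)-2) ∉ S ∧ ((k:ℤ)-4) ∉ S}
      = (fun T => insert ((k:ℤ)-3) (insert ((k:ℤ)-5) (insert ((k:ℤ)-6) (shiftF (-2) T))))
        '' QSet (k-2) := by
  have hid := fib_ident' (k := k) (by omega)
  have hrec1 : phi ^ ((k:ℤ)-5) + phi ^ ((k:ℤ)-6) = phi ^ ((k:ℤ)-4) := by
    have := phi_zpow_rec ((k:ℤ)-6)
    rw [show (k:ℤ)-6+2 = (k:ℤ)-4 by ring, show (k:ℤ)-6+1 = (k:ℤ)-5 by ring] at this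
    linarith
  have hrec2 : phi ^ ((k:ℤ)-3) + phi ^ ((k:ℤ)-4) = phi ^ ((k:ℤ)-2) := by
    have := phi_zpow_rec ((k:ℤ)-4)
    rw [show (k:ℤ)-4+2 = (k:ℤ)-2 by ring, show (k:ℤ)-4+1 = (k:ℤ)-3 by ring] at this
    linarith
  have hCgt : ∀ c ∈ ({(k:ℤ)-3, (k:ℤ)-5, (k:ℤ)-6} : Finset ℤ), (k:ℤ)-7 < c := by
    intro c hc
    rcases Finset.mem_insert.mp hc with rfl | hc
    · omega
    · rcases Finset.mem_insert.mp hc with rfl | hc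
      · omega
      · rw [Finset.mem_singleton] at hc; omega
  have hQcast : ((k-2:ℕ):ℤ)-2 = (k:ℤ)-4 := by omega
  have hfibL := fibL' (k := k) (by omega)
  have hfibL2 := fibL2' (k := k) hk
  ext S
  simp only [Set.mem_setOf_eq, Set.mem_image]
  constructor
  · rintro ⟨hS, h2, h4⟩
    obtain ⟨h3, hel3⟩ := top_eq hk hS h2
    obtain ⟨hrep, hkc⟩ := hS
    -- S₁ = S.erase (k-3)
    have hsum1 : sumPhi (S.erase ((k:ℤ)-3)) = (Nat.fib k : ℝ) - phi ^ ((k:ℤ)-3) := by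
      rw [sumPhi_erase h3, hrep]
    have hel1 : ∀ i ∈ S.erase ((k:ℤ)-3), i ≤ (k:ℤ)-5 := by
      intro i hi
      obtain ⟨hne3, hiS⟩ := Finset.mem_erase.mp hi
      have := hel3 i hiS
      have : i ≠ (k:ℤ)-4 := fun h => h4 (h ▸ hiS)
      omega
    have h5 : ((k:ℤ)-5) ∈ S.erase ((k:ℤ)-3) := by
      apply force_top hsum1 hel1
      rw [show (k:ℤ)-5+1 = (k:ℤ)-4 by ring]
      nlinarith [zpow_pos phi_pos ((k:ℤ)-5)]
    -- S₂ = erase (k-5)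
    have hsum2 : sumPhi ((S.erase ((k:ℤ)-3)).erase ((k:ℤ)-5))
        = (Nat.fib k : ℝ) - phi ^ ((k:ℤ)-3) - phi ^ ((k:ℤ)-5) := by
      rw [sumPhi_erase h5, hsum1]
    have hel2 : ∀ i ∈ (S.erase ((k:ℤ)-3)).erase ((k:ℤ)-5), i ≤ (k:ℤ)-6 := by
      intro i hi
      obtain ⟨hne5, hi1⟩ := Finset.mem_erase.mp hi
      have := hel1 i hi1
      omega
    have h6 : ((k:ℤ)-6) ∈ (S.erase ((k:ℤ)-3)).erase ((k:ℤ)-5) := by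
      apply force_top hsum2 hel2
      rw [show (k:ℤ)-6+1 = (k:ℤ)-5 by ring]
      linarith
    -- S₃ = erase (k-6)
    have hsum3 : sumPhi (((S.erase ((k:ℤ)-3)).erase ((k:ℤ)-5)).erase ((k:ℤ)-6))
        = phi ^ (-2:ℤ) * (Nat.fib (k-2) : ℝ) := by
      rw [sumPhi_erase h6, hsum2, hid]
      linarith
    have hel3' : ∀ i ∈ ((S.erase ((k:ℤ)-3)).erase ((k:ℤ)-5)).erase ((k:ℤ)-6), i ≤ (k:ℤ)-7 := by
      intro i hi
      obtain ⟨hne6, hi2⟩ := Finset.mem_erase.mp hi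
      have := hel2 i hi2
      omega
    have hunion : ((S.erase ((k:ℤ)-3)).erase ((k:ℤ)-5)).erase ((k:ℤ)-6)
        ∪ {(k:ℤ)-3, (k:ℤ)-5, (k:ℤ)-6} = S := by
      rw [← insert3_eq, Finset.insert_erase h6, Finset.insert_erase h5, Finset.insert_erase h3]
    refine ⟨shiftF 2 (((S.erase ((k:ℤ)-3)).erase ((k:ℤ)-5)).erase ((k:ℤ)-6)), ⟨⟨?_, ?_⟩, ?_⟩, ?_⟩
    · rw [sumPhi_shiftF, hsum3, ← mul_assoc, ← zpow_add₀ phi_ne_zero]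
      norm_num
    · rw [KC_shiftF_iff]
      exact (glue_KC hk hsum3 hel3' hCgt).mp (by rwa [hunion])
    · rw [hQcast]
      intro hmem
      have := hel3' _ (mem_shiftF.mp hmem)
      omega
    · rw [shiftF_cancel', Finset.insert_erase h6, Finset.insert_erase h5,
        Finset.insert_erase h3]
  · rintro ⟨T, ⟨hT, hTQ⟩, rfl⟩
    rw [hQcast] at hTQ
    have hTel : ∀ i ∈ T, i ≤ (k:ℤ)-5 := by
      intro i hi
      have := KSet_elem_le (k' := k-2) (by omega) hT i hi
      have : i ≠ (k:ℤ)-4 := fun h => hTQ (h ▸ hi)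
      omega
    have hb0 : ∀ i ∈ shiftF (-2) T, i ≤ (k:ℤ)-7 := by
      intro i hi
      have := hTel _ (mem_shiftF.mp hi)
      omega
    have hsum0 : sumPhi (shiftF (-2) T) = phi ^ (-2:ℤ) * (Nat.fib (k-2) : ℝ) := by
      rw [sumPhi_shiftF, hT.1]
    have hn6 : ((k:ℤ)-6) ∉ shiftF (-2) T := fun h => by have := hb0 _ h; omega
    have hn5 : ((k:ℤ)-5) ∉ insert ((k:ℤ)-6) (shiftF (-2) T) := by
      intro h
      rcases Finset.mem_insert.mp h with h | h
      · omega
      · have := hb0 _ h; omega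
    have hn3 : ((k:ℤ)-3) ∉ insert ((k:ℤ)-5) (insert ((k:ℤ)-6) (shiftF (-2) T)) := by
      intro h
      rcases Finset.mem_insert.mp h with h | h
      · omega
      · rcases Finset.mem_insert.mp h with h | h
        · omega
        · have := hb0 _ h; omega
    refine ⟨⟨?_, ?_⟩, ?_, ?_⟩
    · rw [sumPhi_insert hn3, sumPhi_insert hn5, sumPhi_insert hn6, hsum0, hid]
      linarith
    · rw [insert3_eq]
      rw [glue_KC hk hsum0 hb0 hCgt, KC_shiftF_iff]
      exact hT.2
    · intro h
      rcases Finset.mem_insert.mp h with h | h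
      · omega
      · rcases Finset.mem_insert.mp h with h | h
        · omega
        · rcases Finset.mem_insert.mp h with h | h
          · omega
          · have := hb0 _ h; omega
    · intro h
      rcases Finset.mem_insert.mp h with h | h
      · omega
      · rcases Finset.mem_insert.mp h with h | h
        · omega
        · rcases Finset.mem_insert.mp h with h | h
          · omega
          · have := hb0 _ h; omega

/-! ### Base cases -/

lemma QSet_eq_filter (k t : ℕ) (hk1 : 1 ≤ Nat.fib k) (ht : ((Nat.fib k : ℕ):ℝ) < phi ^ (t:ℤ)) :
    QSet k = ↑((((Finset.Icc (-(t:ℤ)-1) ((t:ℤ)-1)).powerset).filter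
      (fun S => c1 S = Nat.fib k ∧ c2 S = 0 ∧ KC S)).filter (fun S => ((k:ℤ)-2) ∉ S)) := by
  have h := KSet_eq_filter (Nat.fib k) t hk1 ht
  ext S
  have hmem : S ∈ KSet (Nat.fib k) ↔
      S ∈ (((Finset.Icc (-(t:ℤ)-1) ((t:ℤ)-1)).powerset).filter
        (fun S => c1 S = Nat.fib k ∧ c2 S = 0 ∧ KC S)) := by
    rw [← Finset.mem_coe, ← h]
  constructor
  · rintro ⟨hKS, hq⟩
    rw [Finset.mem_coe, Finset.mem_filter]
    exact ⟨hmem.mp hKS, hq⟩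
  · intro hS
    rw [Finset.mem_coe, Finset.mem_filter] at hS
    exact ⟨hmem.mpr hS.1, hS.2⟩

lemma num1 : ((1:ℕ):ℝ) < phi ^ (((1:ℕ)):ℤ) := by
  rw [show (((1:ℕ)):ℤ) = (1:ℤ) by norm_num, zpow_one]
  push_cast
  nlinarith [one_lt_phi]
lemma num2 : ((2:ℕ):ℝ) < phi ^ (((2:ℕ)):ℤ) := by
  rw [show (((2:ℕ)):ℤ) = (2:ℤ) by norm_num, phi_z2]
  push_cast
  nlinarith [one_lt_phi]
lemma num3 : ((3:ℕ):ℝ) < phi ^ (((3:ℕ)):ℤ) := by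
  rw [show (((3:ℕ)):ℤ) = (3:ℤ) by norm_num, phi_z3]
  push_cast
  nlinarith [one_lt_phi]

lemma KSet_base1 : KSet 1 = ↑(((Finset.Icc (-(1:ℤ)-1) ((1:ℤ)-1)).powerset).filter
    (fun S => c1 S = 1 ∧ c2 S = 0 ∧ KC S)) := by
  have := KSet_eq_filter 1 1 (by norm_num) num1
  convert this using 4
  all_goals simp

lemma KSet_base2 : KSet 2 = ↑(((Finset.Icc (-(2:ℤ)-1) ((2:ℤ)-1)).powerset).filter
    (fun S => c1 S = 2 ∧ c2 S = 0 ∧ KC S)) := by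
  have := KSet_eq_filter 2 2 (by norm_num) num2
  convert this using 4
  all_goals simp

lemma KSet_base3 : KSet 3 = ↑(((Finset.Icc (-(3:ℤ)-1) ((3:ℤ)-1)).powerset).filter
    (fun S => c1 S = 3 ∧ c2 S = 0 ∧ KC S)) := by
  have := KSet_eq_filter 3 3 (by norm_num) num3
  convert this using 4
  all_goals simp

lemma QSet_base3 : QSet 3 = ↑((((Finset.Icc (-(2:ℤ)-1) ((2:ℤ)-1)).powerset).filter
    (fun S => c1 S = 2 ∧ c2 S = 0 ∧ KC S)).filter (fun S => ((3:ℤ)-2) ∉ S)) := by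
  have := QSet_eq_filter 3 2 (by decide) (by rw [show Nat.fib 3 = 2 by decide]; exact num2)
  rw [show Nat.fib 3 = 2 by decide] at this
  convert this using 5
  all_goals simp

lemma QSet_base4 : QSet 4 = ↑((((Finset.Icc (-(3:ℤ)-1) ((3:ℤ)-1)).powerset).filter
    (fun S => c1 S = 3 ∧ c2 S = 0 ∧ KC S)).filter (fun S => ((4:ℤ)-2) ∉ S)) := by
  have := QSet_eq_filter 4 3 (by decide) (by rw [show Nat.fib 4 = 3 by decide]; exact num3)
  rw [show Nat.fib 4 = 3 by decide] at this
  convert this using 5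
  all_goals simp

/-! ### Counting -/

lemma injA {k : ℕ} (hk : 5 ≤ k) :
    Set.InjOn (fun T => insert ((k:ℤ)-2) (shiftF (-2) T)) (KSet (Nat.fib (k-2))) := by
  have hnm : ∀ T ∈ KSet (Nat.fib (k-2)), ((k:ℤ)-2) ∉ shiftF (-2) T := by
    intro T hT h
    have := KSet_elem_le (k' := k-2) (by omega) hT _ (mem_shiftF.mp h)
    omega
  intro T1 h1 T2 h2 heq
  have := congrArg (fun S => shiftF 2 (S.erase ((k:ℤ)-2))) heq
  simpa [Finset.erase_insert (hnm T1 h1), Finset.erase_insert (hnm T2 h2),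
    shiftF_cancel] using this

lemma injB {k : ℕ} (hk : 5 ≤ k) :
    Set.InjOn (fun T => insert ((k:ℤ)-3) (insert ((k:ℤ)-4) (shiftF (-2) T)))
      (KSet (Nat.fib (k-2))) := by
  have hel : ∀ T ∈ KSet (Nat.fib (k-2)), ∀ i ∈ shiftF (-2) T, i ≤ (k:ℤ)-6 := by
    intro T hT i h
    have := KSet_elem_le (k' := k-2) (by omega) hT _ (mem_shiftF.mp h)
    omega
  intro T1 h1 T2 h2 heq
  have e : ∀ T ∈ KSet (Nat.fib (k-2)),
      ((insert ((k:ℤ)-3) (insert ((k:ℤ)-4) (shiftF (-2) T))).erase ((k:ℤ)-3)).erase ((k:ℤ)-4)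
        = shiftF (-2) T := by
    intro T hT
    have h4 : ((k:ℤ)-4) ∉ shiftF (-2) T := fun h => by have := hel T hT _ h; omega
    have h3 : ((k:ℤ)-3) ∉ insert ((k:ℤ)-4) (shiftF (-2) T) := by
      intro h
      rcases Finset.mem_insert.mp h with h | h
      · omega
      · have := hel T hT _ h; omega
    rw [Finset.erase_insert h3, Finset.erase_insert h4]
  have := congrArg (fun S => shiftF 2 ((S.erase ((k:ℤ)-3)).erase ((k:ℤ)-4))) heq
  simp only [e T1 h1, e T2 h2, shiftF_cancel] at this
  exact this

lemma injC {k : ℕ} (hk : 5 ≤ k) :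
    Set.InjOn (fun T => insert ((k:ℤ)-3) (insert ((k:ℤ)-5) (insert ((k:ℤ)-6) (shiftF (-2) T))))
      (QSet (k-2)) := by
  have hel : ∀ T ∈ QSet (k-2), ∀ i ∈ shiftF (-2) T, i ≤ (k:ℤ)-7 := by
    intro T hT i h
    have h1 := KSet_elem_le (k' := k-2) (by omega) hT.1 _ (mem_shiftF.mp h)
    have h2 : i + 2 ≠ (k:ℤ)-4 := by
      intro he
      apply hT.2
      rw [show ((k-2:ℕ):ℤ)-2 = (k:ℤ)-4 by omega]
      exact he ▸ mem_shiftF.mp h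
    omega
  intro T1 h1 T2 h2 heq
  have e : ∀ T ∈ QSet (k-2),
      (((insert ((k:ℤ)-3) (insert ((k:ℤ)-5) (insert ((k:ℤ)-6) (shiftF (-2) T)))).erase
        ((k:ℤ)-3)).erase ((k:ℤ)-5)).erase ((k:ℤ)-6) = shiftF (-2) T := by
    intro T hT
    have h6 : ((k:ℤ)-6) ∉ shiftF (-2) T := fun h => by have := hel T hT _ h; omega
    have h5 : ((k:ℤ)-5) ∉ insert ((k:ℤ)-6) (shiftF (-2) T) := by
      intro h
      rcases Finset.mem_insert.mp h with h | h
      · omega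
      · have := hel T hT _ h; omega
    have h3 : ((k:ℤ)-3) ∉ insert ((k:ℤ)-5) (insert ((k:ℤ)-6) (shiftF (-2) T)) := by
      intro h
      rcases Finset.mem_insert.mp h with h | h
      · omega
      · rcases Finset.mem_insert.mp h with h | h
        · omega
        · have := hel T hT _ h; omega
    rw [Finset.erase_insert h3, Finset.erase_insert h5, Finset.erase_insert h6]
  have := congrArg
    (fun S => shiftF 2 (((S.erase ((k:ℤ)-3)).erase ((k:ℤ)-5)).erase ((k:ℤ)-6))) heq
  simp only [e T1 h1, e T2 h2, shiftF_cancel] at this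
  exact this

lemma partitionK {k : ℕ} (hk : 5 ≤ k) :
    KSet (Nat.fib k) =
      {S | S ∈ KSet (Nat.fib k) ∧ ((k:ℤ)-2) ∈ S}
      ∪ ({S | S ∈ KSet (Nat.fib k) ∧ ((k:ℤ)-2) ∉ S ∧ ((k:ℤ)-4) ∈ S}
      ∪ {S | S ∈ KSet (Nat.fib k) ∧ ((k:ℤ)-2) ∉ S ∧ ((k:ℤ)-4) ∉ S}) := by
  ext S
  simp only [Set.mem_union, Set.mem_setOf_eq]
  by_cases h1 : ((k:ℤ)-2) ∈ S <;> by_cases h2 : ((k:ℤ)-4) ∈ S <;> tauto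

lemma partitionQ {k : ℕ} (hk : 5 ≤ k) :
    QSet k =
      {S | S ∈ KSet (Nat.fib k) ∧ ((k:ℤ)-2) ∉ S ∧ ((k:ℤ)-4) ∈ S}
      ∪ {S | S ∈ KSet (Nat.fib k) ∧ ((k:ℤ)-2) ∉ S ∧ ((k:ℤ)-4) ∉ S} := by
  ext S
  simp only [QSet, Set.mem_union, Set.mem_setOf_eq]
  by_cases h2 : ((k:ℤ)-4) ∈ S <;> tauto

lemma fib_rec_count {k : ℕ} (hk : 5 ≤ k) :
    Nat.fib k = 2 * Nat.fib (k-2) + Nat.fib (k-3) ∧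
    Nat.fib (k-1) = Nat.fib (k-2) + Nat.fib (k-3) := by
  have h1 : Nat.fib ((k-2)+2) = Nat.fib (k-2) + Nat.fib ((k-2)+1) := Nat.fib_add_two
  have h2 : Nat.fib ((k-3)+2) = Nat.fib (k-3) + Nat.fib ((k-3)+1) := Nat.fib_add_two
  rw [show (k-2)+2 = k by omega, show (k-2)+1 = k-1 by omega] at h1
  rw [show (k-3)+2 = k-1 by omega, show (k-3)+1 = k-2 by omega] at h2
  omega

lemma main_count : ∀ k, 3 ≤ k →
    (KSet (Nat.fib k)).ncard = Nat.fib k ∧ (QSet k).ncard = Nat.fib (k-1) := by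
  intro k
  induction k using Nat.strong_induction_on with
  | _ k ih =>
    intro hk
    by_cases hk5 : k < 5
    · have hk34 : k = 3 ∨ k = 4 := by omega
      rcases hk34 with rfl | rfl
      · constructor
        · rw [show Nat.fib 3 = 2 by decide, KSet_base2, Set.ncard_coe_finset]
          decide
        · rw [QSet_base3, Set.ncard_coe_finset]
          decide
      · constructor
        · rw [show Nat.fib 4 = 3 by decide, KSet_base3, Set.ncard_coe_finset]
          decide
        · rw [QSet_base4, Set.ncard_coe_finset]
          decide
    · push_neg at hk5
      obtain ⟨ihP, ihQ⟩ := ih (k-2) (by omega) (by omega)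
      rw [show (k-2)-1 = k-3 by omega] at ihQ
      set A := {S | S ∈ KSet (Nat.fib k) ∧ ((k:ℤ)-2) ∈ S} with hA
      set B := {S | S ∈ KSet (Nat.fib k) ∧ ((k:ℤ)-2) ∉ S ∧ ((k:ℤ)-4) ∈ S} with hB
      set C := {S | S ∈ KSet (Nat.fib k) ∧ ((k:ℤ)-2) ∉ S ∧ ((k:ℤ)-4) ∉ S} with hC
      have hfin : (KSet (Nat.fib k)).Finite := KSet_finite (fib_ge_one (by omega))
      have finA : A.Finite := hfin.subset (fun S h => h.1)
      have finB : B.Finite := hfin.subset (fun S h => h.1)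
      have finC : C.Finite := hfin.subset (fun S h => h.1)
      have cardA : A.ncard = Nat.fib (k-2) := by
        rw [hA, stepA hk5, Set.ncard_image_of_injOn (injA hk5), ihP]
      have cardB : B.ncard = Nat.fib (k-2) := by
        rw [hB, stepB hk5, Set.ncard_image_of_injOn (injB hk5), ihP]
      have cardC : C.ncard = Nat.fib (k-3) := by
        rw [hC, stepC hk5, Set.ncard_image_of_injOn (injC hk5), ihQ]
      have disjBC : Disjoint B C := by
        rw [Set.disjoint_left]
        rintro S ⟨_, _, h4⟩ ⟨_, _, h4'⟩
        exact h4' h4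
      have disjABC : Disjoint A (B ∪ C) := by
        rw [Set.disjoint_left]
        rintro S ⟨_, h2⟩ hbc
        rcases hbc with ⟨_, h2', _⟩ | ⟨_, h2', _⟩ <;> exact h2' h2
      have cardBC : (B ∪ C).ncard = Nat.fib (k-2) + Nat.fib (k-3) := by
        rw [Set.ncard_union_eq disjBC finB finC, cardB, cardC]
      obtain ⟨hf1, hf2⟩ := fib_rec_count hk5
      constructor
      · rw [partitionK hk5, Set.ncard_union_eq disjABC finA (finB.union finC)]
        rw [cardA, cardBC]
        omega
      · rw [partitionQ hk5, Set.ncard_union_eq disjBC finB finC]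
        rw [cardB, cardC]
        omega

/-! ### Bridge to Finsupp representations -/

def indF (S : Finset ℤ) : ℤ →₀ ℕ where
  support := S
  toFun i := if i ∈ S then 1 else 0
  mem_support_toFun i := by simp

lemma indF_apply (S : Finset ℤ) (i : ℤ) : indF S i = if i ∈ S then 1 else 0 := rfl
lemma indF_support (S : Finset ℤ) : (indF S).support = S := rfl

lemma indF_injective : Function.Injective indF := by
  intro S T h
  have := congrArg Finsupp.support h
  rwa [indF_support, indF_support] at this

lemma knottSet_eq_image (n : ℕ) : knottSet n = indF '' KSet n := by
  ext a
  constructor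
  · rintro ⟨⟨hdig, hsum⟩, hknott⟩
    have haS : ∀ i ∈ a.support, (a i : ℝ) = 1 := by
      intro i hi
      have h1 := Finsupp.mem_support_iff.mp hi
      have h2 := hdig i
      have h3 : a i = 1 := by omega
      rw [h3]; norm_num
    refine ⟨a.support, ⟨?_, ?_⟩, ?_⟩
    · unfold sumPhi
      rw [hsum]
      refine Finset.sum_congr rfl (fun i hi => ?_)
      rw [haS i hi, one_mul]
    · intro j hj hmin hbad
      obtain ⟨hb1, hb2⟩ := hbad
      apply hknott j ⟨Finsupp.mem_support_iff.mp hj,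
        fun i hi => hmin i (Finsupp.mem_support_iff.mpr hi)⟩
      constructor
      · have h1 := hdig (j+1)
        have h2 := Finsupp.mem_support_iff.mp hb1
        omega
      · by_contra hc
        exact hb2 (Finsupp.mem_support_iff.mpr hc)
    · apply Finsupp.ext
      intro i
      rw [indF_apply]
      by_cases hi : i ∈ a.support
      · have h1 := Finsupp.mem_support_iff.mp hi
        have h2 := hdig i
        simp only [if_pos hi]
        omega
      · have h1 := Finsupp.notMem_support_iff.mp hi
        simp only [if_neg hi]
        omega
  · rintro ⟨S, ⟨hrep, hkc⟩, rfl⟩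
    have happly : ∀ i, indF S i = if i ∈ S then 1 else 0 := indF_apply S
    refine ⟨⟨?_, ?_⟩, ?_⟩
    · intro i
      rw [happly]
      split <;> norm_num
    · rw [show (indF S).support = S from rfl, ← hrep]
      unfold sumPhi
      refine Finset.sum_congr rfl (fun i hi => ?_)
      rw [happly, if_pos hi]
      norm_num
    · rintro j ⟨hj0, hjmin⟩ ⟨h1, h2⟩
      have hjS : j ∈ S := by
        by_contra hc
        rw [happly, if_neg hc] at hj0
        exact hj0 rfl
      have hj1S : j + 1 ∈ S := by
        by_contra hc
        rw [happly, if_neg hc] at h1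
        omega
      have hj2S : j + 2 ∉ S := by
        intro hc
        rw [happly, if_pos hc] at h2
        omega
      refine hkc j hjS ?_ ⟨hj1S, hj2S⟩
      intro i hi
      apply hjmin
      rw [happly, if_pos hi]
      omega

/-- For `k ≥ 1`, the set of Knott representations of `F_k` is finite and
`κ(F_k) = F_k`. -/
theorem knott_count_fib (k : ℕ) (hk : 1 ≤ k) :
    (knottSet (Nat.fib k)).Finite ∧ (knottSet (Nat.fib k)).ncard = Nat.fib k := by
  have hfib1 : 1 ≤ Nat.fib k := fib_ge_one hk
  have hbridge := knottSet_eq_image (Nat.fib k)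
  have hfin : (KSet (Nat.fib k)).Finite := KSet_finite hfib1
  have hcount : (KSet (Nat.fib k)).ncard = Nat.fib k := by
    match k, hk with
    | 1, _ =>
        rw [show Nat.fib 1 = 1 by decide, KSet_base1, Set.ncard_coe_finset]
        decide
    | 2, _ =>
        rw [show Nat.fib 2 = 1 by decide, KSet_base1, Set.ncard_coe_finset]
        decide
    | (n+3), _ => exact (main_count (n+3) (by omega)).1
  constructor
  · rw [hbridge]
    exact hfin.image _
  · rw [hbridge, Set.ncard_image_of_injective _ indF_injective, hcount]
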